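/- (Super Nakayama, part iii) Let $A$ be a local supercommutative ring with maximal homogeneous ideal $m$. Every finitely generated projective module $E$ over the ungraded ring $A$ is free, and any family of lifts of a basis of $E/mE$ over $A/m$ is a basis of $E$. -/

import Mathlib

set_option synthInstance.maxHeartbeats 1000000
set_option maxHeartbeats 1000000

noncomputable section

/-- A (ℤ/2-graded) ring is supercommutative when homogeneous elements commute up to
the sign rule `a b = (-1)^{|a||b|} b a`. -/
def SuperCommutative {A : Type*} [Ring A] (𝒜 : ZMod 2 → AddSubgroup A) : Prop :=
  ∀ (i j : ZMod 2) (a b : A), a ∈ 𝒜 i → b ∈ 𝒜 j →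
    a * b = (if i = 1 ∧ j = 1 then -(b * a) else b * a)

/-- The submodule `m • N` (stated so as to make sense over a noncommutative ring). -/
def idealSmul {A : Type*} [Ring A] (m : Ideal A) {E : Type*} [AddCommGroup E]
    [Module A E] (N : Submodule A E) : Submodule A E :=
  Submodule.span A {x : E | ∃ a ∈ m, ∃ y ∈ N, x = a • y}

section Aux

variable {A : Type*} [Ring A] {m : Ideal A}

/-- In a (possibly noncommutative) local ring, anything outside the maximal left ideal
is a unit. -/
lemma locUnit (hlocal : ∀ I : Ideal A, I ≠ ⊤ → I ≤ m) (hmax : m ≠ ⊤)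
    {a : A} (ha : a ∉ m) : IsUnit a := by
  have hone : (1 : A) ∉ m := (Ideal.ne_top_iff_one m).mp hmax
  have hspan : ∀ b : A, b ∉ m → ∃ u : A, u * b = 1 := by
    intro b hb
    have htop : Ideal.span {b} = ⊤ := by
      by_contra h
      exact hb (hlocal _ h (Ideal.mem_span_singleton_self b))
    have h1 : (1 : A) ∈ Ideal.span {b} := htop ▸ Submodule.mem_top
    exact Ideal.mem_span_singleton'.mp h1
  obtain ⟨u, hu⟩ := hspan a ha
  have hum : u ∉ m := by
    intro hum
    have hau : a * u ∈ m := m.mul_mem_left a hum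
    have h1 : (1 : A) - a * u ∉ m := by
      intro h
      exact hone (by simpa using m.add_mem h hau)
    obtain ⟨w, hw⟩ := hspan _ h1
    have hz : ((1 : A) - a * u) * a = 0 := by
      rw [sub_mul, one_mul, mul_assoc, hu, mul_one, sub_self]
    have ha0 : a = 0 := by
      calc a = 1 * a := (one_mul a).symm
        _ = (w * ((1:A) - a * u)) * a := by rw [hw]
        _ = w * (((1:A) - a * u) * a) := by rw [mul_assoc]
        _ = 0 := by rw [hz, mul_zero]
    have : (1 : A) ∈ m := by
      rw [← hu, ha0, mul_zero]; exact m.zero_mem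
    exact hone this
  obtain ⟨v, hv⟩ := hspan u hum
  have hau : a * u = 1 := by
    calc a * u = 1 * (a * u) := (one_mul _).symm
      _ = (v * u) * (a * u) := by rw [hv]
      _ = v * ((u * a) * u) := by rw [mul_assoc v u (a * u), ← mul_assoc u a u]
      _ = v * u := by rw [hu, one_mul]
      _ = 1 := hv
  exact ⟨⟨a, u, hau, hu⟩, rfl⟩

/-- In a local ring, the maximal left ideal is in fact two-sided. -/
lemma locRight (hlocal : ∀ I : Ideal A, I ≠ ⊤ → I ≤ m) (hmax : m ≠ ⊤)
    {a : A} (ha : a ∈ m) (r : A) : a * r ∈ m := by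
  have hone : (1 : A) ∉ m := (Ideal.ne_top_iff_one m).mp hmax
  by_contra h
  obtain ⟨w, hw⟩ := locUnit hlocal hmax h
  -- hw : ↑w = a * r
  have h1 : a * (r * (↑w⁻¹ : A)) = 1 := by
    rw [← mul_assoc, ← hw, Units.mul_inv]
  have hbm : r * (↑w⁻¹ : A) ∉ m := by
    intro hb
    exact hone (h1 ▸ m.mul_mem_left a hb)
  obtain ⟨z, hz⟩ := locUnit hlocal hmax hbm
  -- hz : ↑z = r * ↑w⁻¹
  have haz : a = (↑z⁻¹ : A) := by
    calc a = a * ((↑z : A) * ↑z⁻¹) := by rw [Units.mul_inv, mul_one]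
      _ = (a * (↑z : A)) * ↑z⁻¹ := by rw [mul_assoc]
      _ = (a * (r * (↑w⁻¹ : A))) * ↑z⁻¹ := by rw [hz]
      _ = 1 * ↑z⁻¹ := by rw [h1]
      _ = (↑z⁻¹ : A) := one_mul _
  have : (1 : A) ∈ m := by
    have hm := m.mul_mem_left (↑z : A) ha
    rwa [haz, Units.mul_inv] at hm
  exact hone this

/-- Nakayama-style induction: if `N ≤ K ⊔ span x` with all `x i ∈ N`, and
`N ≤ K ⊔ m N`, then `N ≤ K`. -/
lemma nakCore (hlocal : ∀ I : Ideal A, I ≠ ⊤ → I ≤ m) (hmax : m ≠ ⊤)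
    {E : Type*} [AddCommGroup E] [Module A E] (K N : Submodule A E) :
    ∀ (n : ℕ) (x : Fin n → E), (∀ i, x i ∈ N) →
      N ≤ K ⊔ Submodule.span A (Set.range x) →
      N ≤ K ⊔ idealSmul m N → N ≤ K := by
  have hone : (1 : A) ∉ m := (Ideal.ne_top_iff_one m).mp hmax
  intro n
  induction n with
  | zero =>
    intro x _ hNK _
    rwa [Set.range_eq_empty x, Submodule.span_empty, sup_bot_eq] at hNK
  | succ n IH =>
    intro x hxN hNK hNm
    -- every element of `idealSmul m N` is `k + ∑ aᵢ • xᵢ` with `k ∈ K`, `aᵢ ∈ m`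
    have key : ∀ z ∈ idealSmul m N,
        ∃ k ∈ K, ∃ a : Fin (n + 1) → A, (∀ i, a i ∈ m) ∧ z = k + ∑ i, a i • x i := by
      intro z hz
      refine Submodule.span_induction ?_ ?_ ?_ ?_ hz
      · rintro w ⟨a, ham, y, hyN, rfl⟩
        obtain ⟨k, hk, s, hs, rfl⟩ := Submodule.mem_sup.mp (hNK hyN)
        obtain ⟨c, rfl⟩ := (Submodule.mem_span_range_iff_exists_fun A).mp hs
        refine ⟨a • k, K.smul_mem a hk, fun i => a * c i,
          fun i => locRight hlocal hmax ham (c i), ?_⟩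
        rw [smul_add, Finset.smul_sum]
        simp [mul_smul]
      · exact ⟨0, K.zero_mem, 0, fun i => m.zero_mem, by simp⟩
      · rintro z₁ z₂ - - ⟨k₁, hk₁, a₁, ha₁, rfl⟩ ⟨k₂, hk₂, a₂, ha₂, rfl⟩
        refine ⟨k₁ + k₂, K.add_mem hk₁ hk₂, a₁ + a₂,
          fun i => m.add_mem (ha₁ i) (ha₂ i), ?_⟩
        simp only [Pi.add_apply, add_smul, Finset.sum_add_distrib]
        abel
      · rintro r z - ⟨k, hk, a, ha, rfl⟩
        refine ⟨r • k, K.smul_mem r hk, fun i => r * a i,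
          fun i => m.mul_mem_left r (ha i), ?_⟩
        rw [smul_add, Finset.smul_sum]
        simp [mul_smul]
    -- decompose x (last)
    obtain ⟨y, hy, z, hz, hyz⟩ := Submodule.mem_sup.mp (hNm (hxN (Fin.last n)))
    obtain ⟨k, hk, a, ha, hzz⟩ := key z hz
    set S := ∑ i : Fin n, a i.castSucc • x i.castSucc with hS
    have heq : y + k + S + a (Fin.last n) • x (Fin.last n) = x (Fin.last n) := by
      conv_rhs => rw [← hyz, hzz, Fin.sum_univ_castSucc]
      rw [← hS]
      abel
    have h2 : ((1 : A) - a (Fin.last n)) • x (Fin.last n) = y + k + S := by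
      rw [sub_smul, one_smul]
      exact sub_eq_iff_eq_add.mpr heq.symm
    have hnm : (1 : A) - a (Fin.last n) ∉ m := by
      intro h
      exact hone (by simpa using m.add_mem h (ha (Fin.last n)))
    obtain ⟨u, hu⟩ := locUnit hlocal hmax hnm
    have h3 : x (Fin.last n) = (↑u⁻¹ : A) • (y + k + S) := by
      rw [← h2, ← hu, smul_smul, Units.inv_mul, one_smul]
    have hmem : x (Fin.last n) ∈ K ⊔ Submodule.span A (Set.range (x ∘ Fin.castSucc)) := by
      rw [h3]
      refine Submodule.smul_mem _ _ (add_mem ?_ ?_)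
      · exact Submodule.mem_sup_left (K.add_mem hy hk)
      · refine Submodule.mem_sup_right (Submodule.sum_mem _ fun i _ => ?_)
        exact Submodule.smul_mem _ _ (Submodule.subset_span ⟨i, rfl⟩)
    have hx' : ∀ i : Fin (n + 1),
        x i ∈ K ⊔ Submodule.span A (Set.range (x ∘ Fin.castSucc)) := by
      intro i
      induction i using Fin.lastCases with
      | last => exact hmem
      | cast i => exact Submodule.mem_sup_right (Submodule.subset_span ⟨i, rfl⟩)
    have hNle : N ≤ K ⊔ Submodule.span A (Set.range (x ∘ Fin.castSucc)) := by
      refine hNK.trans (sup_le le_sup_left (Submodule.span_le.mpr ?_))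
      rintro - ⟨i, rfl⟩
      exact hx' i
    exact IH (x ∘ Fin.castSucc) (fun i => hxN _) hNle hNm

end Aux

/-- Super Nakayama, part (iii): over a local supercommutative ring `A`, a finitely
generated projective module `E` (i.e. `E ⊕ F ≅ A^N` for some `F`) is free; moreover any
family of lifts of a basis of `E/mE` over `A/m` is a basis of `E`. -/
theorem super_nakayama_iii
    (A : Type*) [Ring A] (𝒜 : ZMod 2 → AddSubgroup A) [GradedRing 𝒜]
    (hsc : SuperCommutative 𝒜)
    (m : Ideal A)
    (hhom : ∀ (i : ZMod 2), ∀ a ∈ m, (DirectSum.decompose 𝒜 a i : A) ∈ m)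
    (hlocal : ∀ I : Ideal A, I ≠ ⊤ → I ≤ m) (hmax : m ≠ ⊤)
    (E : Type*) [AddCommGroup E] [Module A E] [Module.Finite A E]
    -- `E` is projective: `E ⊕ F ≅ A^N`
    (F : Type*) [AddCommGroup F] [Module A F] (N : ℕ)
    (proj : Nonempty ((E × F) ≃ₗ[A] (Fin N → A)))
    (p : ℕ) (e : Fin p → E)
    -- the images of the `eᵢ` form a basis of `E/mE` over `A/m`:
    (hspan : Submodule.span A (Set.range e) ⊔ idealSmul m (⊤ : Submodule A E) = ⊤)
    (hindep : ∀ c : Fin p → A,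
      (∑ i, c i • e i) ∈ idealSmul m (⊤ : Submodule A E) → ∀ i, c i ∈ m) :
    ∃ b : Module.Basis (Fin p) A E, ∀ i, b i = e i := by
  classical
  obtain ⟨g⟩ := proj
  -- Step 1: the `e i` span `E` (Nakayama)
  obtain ⟨nE, xE, hxE⟩ := Module.Finite.exists_fin (R := A) (M := E)
  have hKtop : Submodule.span A (Set.range e) = ⊤ := by
    have h := nakCore hlocal hmax (Submodule.span A (Set.range e)) ⊤ nE xE
      (fun i => Submodule.mem_top)
      (by rw [hxE]; exact le_sup_right)
      (le_of_eq hspan.symm)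
    exact top_le_iff.mp h
  -- Step 2: `E` is projective
  have hproj : Module.Projective A E :=
    Module.Projective.of_split (M := Fin N → A)
      (g.toLinearMap.comp (LinearMap.inl A E F))
      ((LinearMap.fst A E F).comp g.symm.toLinearMap)
      (by ext v; simp)
  -- the linear map `(Fin p → A) → E`, `c ↦ ∑ cᵢ • eᵢ`
  let φ : (Fin p → A) →ₗ[A] E :=
    { toFun := fun c => ∑ i, c i • e i
      map_add' := by
        intro c d
        simp [add_smul, Finset.sum_add_distrib]
      map_smul' := by
        intro r c
        simp [mul_smul, Finset.smul_sum] }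
  have hφ : ∀ c, φ c = ∑ i, c i • e i := fun c => rfl
  have hsurj : Function.Surjective φ := by
    intro v
    have hv : v ∈ Submodule.span A (Set.range e) := by rw [hKtop]; exact Submodule.mem_top
    obtain ⟨c, hc⟩ := (Submodule.mem_span_range_iff_exists_fun A).mp hv
    exact ⟨c, hc⟩
  obtain ⟨s, hs⟩ := Module.projective_lifting_property φ LinearMap.id hsurj
  have hsφ : ∀ v : E, φ (s v) = v := fun v => LinearMap.congr_fun hs v
  -- the projector onto `ker φ`
  let π : (Fin p → A) →ₗ[A] (Fin p → A) := LinearMap.id - s.comp φ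
  have hπker : ∀ c, φ (π c) = 0 := by
    intro c
    simp [π, hsφ]
  have hπfix : ∀ c, φ c = 0 → π c = c := by
    intro c h
    simp [π, h]
  let x : Fin p → (Fin p → A) := fun i => π ((Pi.single i 1 : Fin p → A))
  have hxker : ∀ i, x i ∈ LinearMap.ker φ := fun i => LinearMap.mem_ker.mpr (hπker _)
  have hdecomp : ∀ c : Fin p → A, φ c = 0 → c = ∑ i, c i • x i := by
    intro c h
    have h1 : c = ∑ i, c i • (Pi.single i 1 : Fin p → A) := by
      funext j
      rw [Finset.sum_apply]
      simp [Pi.single_apply]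
    calc c = π c := (hπfix c h).symm
      _ = π (∑ i, c i • (Pi.single i 1 : Fin p → A)) := by rw [← h1]
      _ = ∑ i, c i • x i := by
          rw [map_sum]
          simp [x]
  have hkerm : ∀ c : Fin p → A, φ c = 0 → ∀ i, c i ∈ m := by
    intro c h i
    refine hindep c ?_ i
    have h0 : ∑ i, c i • e i = (0 : E) := h
    rw [h0]
    exact Submodule.zero_mem _
  have hker : LinearMap.ker φ ≤ ⊥ := by
    refine nakCore hlocal hmax ⊥ (LinearMap.ker φ) p x hxker ?_ ?_
    · intro c hc
      refine Submodule.mem_sup_right ?_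
      rw [hdecomp c (LinearMap.mem_ker.mp hc)]
      exact Submodule.sum_mem _ fun i _ =>
        Submodule.smul_mem _ _ (Submodule.subset_span ⟨i, rfl⟩)
    · intro c hc
      refine Submodule.mem_sup_right ?_
      rw [hdecomp c (LinearMap.mem_ker.mp hc)]
      refine Submodule.sum_mem _ fun i _ => Submodule.subset_span ?_
      exact ⟨c i, hkerm c (LinearMap.mem_ker.mp hc) i, x i, hxker i, rfl⟩
  have hli : LinearIndependent A e := by
    rw [Fintype.linearIndependent_iff]
    intro c hc i
    have hcker : c ∈ LinearMap.ker φ := LinearMap.mem_ker.mpr hc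
    have : c = 0 := Submodule.mem_bot A |>.mp (hker hcker)
    rw [this]; rfl
  exact ⟨Module.Basis.mk hli (le_of_eq hKtop.symm), fun i => Module.Basis.mk_apply _ _ i⟩
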